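/- For letters a, b, c in the ordered alphabet B = {m̄ < ... < 1̄ < 1 < ... < n}: if the Γ-shaped tableau with a in position (1,1), b in position (1,2), c in position (2,1) is (m,n)-semistandard, then exactly one of the following holds: (i) the row (c, b) is row-semistandard, in which case the skew tableau with a at (1,2), c at (2,1), b at (2,2) is semistandard; or (ii) the column (b above c) is column-semistandard, in which case the skew tableau with b at (1,2), a at (2,1), c at (2,2) is semistandard. Moreover the resulting correspondence is a bijection between semistandard tableaux of the two shapes (the Knuth relation bijection). -/

import Mathlib

open Classical

/-- Row-semistandardness of a horizontal domino (letters coded `0,…,m+n-1`,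
barred = codes `< m`): weak increase, equality only for barred letters. -/
def rowSS (m x y : ℕ) : Prop := x ≤ y ∧ (x = y → x < m)

/-- Column-semistandardness of a vertical domino: weak increase, equality only
for unbarred letters. -/
def colSS (m x y : ℕ) : Prop := x ≤ y ∧ (x = y → m ≤ x)

/-- The Knuth relation (Lemma 4.8 of Benkart–Kang–Kashiwara).  A semistandard
`Γ`-tableau is a triple `(a,b,c)` with `a` at `(1,1)`, `b` at `(1,2)`, `c` at
`(2,1)`, i.e. `rowSS a b` and `colSS a c`.  A semistandard tableau of the
mirrored skew shape is a triple `(x,y,z)` with `x` at `(1,2)`, `y` at `(2,1)`,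
`z` at `(2,2)`, i.e. `colSS x z` and `rowSS y z`.  For a semistandard
`Γ`-tableau, exactly one of `rowSS c b`, `colSS b c` holds; in the first case
`(a, c, b)` is a semistandard skew tableau, in the second `(b, a, c)` is; and
the resulting map `ψ` is a bijection between the two sets of semistandard
tableaux. -/
theorem knuth_relation (m n : ℕ) :
    (∀ a b c : ℕ, a < m + n → b < m + n → c < m + n →
      rowSS m a b → colSS m a c →
      Xor' (rowSS m c b) (colSS m b c) ∧
      (rowSS m c b → colSS m a b ∧ rowSS m c b) ∧
      (colSS m b c → colSS m b c ∧ rowSS m a c)) ∧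
    Set.BijOn
      (fun t : ℕ × ℕ × ℕ =>
        if rowSS m t.2.2 t.2.1 then (t.1, t.2.2, t.2.1) else (t.2.1, t.1, t.2.2))
      {t : ℕ × ℕ × ℕ | t.1 < m + n ∧ t.2.1 < m + n ∧ t.2.2 < m + n ∧
        rowSS m t.1 t.2.1 ∧ colSS m t.1 t.2.2}
      {t : ℕ × ℕ × ℕ | t.1 < m + n ∧ t.2.1 < m + n ∧ t.2.2 < m + n ∧
        colSS m t.1 t.2.2 ∧ rowSS m t.2.1 t.2.2} := by
  constructor
  · intro a b c _ _ _ hab hac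
    simp only [rowSS, colSS, Xor', Xor] at *
    omega
  · refine ⟨?_, ?_, ?_⟩
    · rintro ⟨a, b, c⟩ ⟨_, _, _, hab, hac⟩
      simp only [Set.mem_setOf_eq]
      split_ifs with h <;> simp only [rowSS, colSS] at * <;> omega
    · rintro ⟨a1, b1, c1⟩ ⟨_, _, _, h1, h1'⟩ ⟨a2, b2, c2⟩ ⟨_, _, _, h2, h2'⟩ heq
      simp only at heq
      split_ifs at heq with p q q <;>
        simp only [Prod.mk.injEq, rowSS, colSS] at * <;> omega
    · rintro ⟨x, y, z⟩ ⟨hx, hy, hz, hxz, hyz⟩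
      by_cases h : colSS m x y
      · refine ⟨(x, z, y), ?_, ?_⟩
        · simp only [Set.mem_setOf_eq, rowSS, colSS] at *
          omega
        · simp only [if_pos hyz]
      · refine ⟨(y, x, z), ?_, ?_⟩
        · simp only [Set.mem_setOf_eq, rowSS, colSS] at *
          omega
        · have : ¬ rowSS m z x := by
            simp only [rowSS, colSS] at *; omega
          simp only [if_neg this]
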